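/- arXiv:1305.5813 — 3 statements merged into one kernel-verified Lean document; each statement's English description precedes it below -/
import Mathlib

section
/- Assume (Ω) and (C1)-(C3). Let x ∈ R^N, t ∈ [0,T), and let X : [0,t] → R^N be any Lipschitz solution of the differential inclusion X'(s) ∈ B(X(s), t-s) a.e. with X(0) = x. Then there exists a measurable control a = (α_1, α_2, μ) ∈ L^∞(0,t; A) such that for almost every s ∈ (0,t): X'(s) = b_1(X(s), t-s, α_1(s)) if X(s) ∈ Ω_1, X'(s) = b_2(X(s), t-s, α_2(s)) if X(s) ∈ Ω_2, and X'(s) = b_H(X(s), t-s, a(s)) if X(s) ∈ H. -/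
open Set Metric MeasureTheory Filter Topology
open scoped RealInnerProductSpace NNReal

noncomputable section

abbrev RN (N : ℕ) : Type := EuclideanSpace ℝ (Fin N)

/-- Assumption (Ω): a two-domain decomposition of `ℝ^N` with a `W^{2,∞}` interface
`H = frontier Ω1 = frontier Ω2`, encoded through the signed distance function `sd`
(positive in `Ω1`, negative in `Ω2`) which is `C¹` with Lipschitz gradient of norm one
in a neighborhood of the interface. -/
structure TwoDomains (N : ℕ) : Type where
  Ω1 : Set (RN N)
  Ω2 : Set (RN N)
  open1 : IsOpen Ω1
  open2 : IsOpen Ω2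
  disj : Disjoint Ω1 Ω2
  frontier_eq : frontier Ω1 = frontier Ω2
  cover : Ω1 ∪ Ω2 ∪ frontier Ω1 = Set.univ
  sd : RN N → ℝ
  nbhd : Set (RN N)
  nbhd_open : IsOpen nbhd
  frontier_sub_nbhd : frontier Ω1 ⊆ nbhd
  gradLipConst : ℝ≥0
  sd_pos : ∀ x ∈ Ω1, sd x = Metric.infDist x (frontier Ω1)
  sd_neg : ∀ x ∈ Ω2, sd x = -Metric.infDist x (frontier Ω1)
  sd_zero : ∀ x ∈ frontier Ω1, sd x = 0
  sd_C1 : ContDiffOn ℝ 1 sd nbhd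
  sd_grad_lip : LipschitzOnWith gradLipConst (fun x => gradient sd x) nbhd
  sd_grad_norm : ∀ x ∈ nbhd, ‖gradient sd x‖ = 1

namespace TwoDomains

variable {N : ℕ} (D : TwoDomains N)

/-- The interface `H`. -/
def H : Set (RN N) := frontier D.Ω1

/-- Unit normal to `∂Ω1` pointing outwards `Ω1`. -/
def n1 (z : RN N) : RN N := -gradient D.sd z

/-- Unit normal to `∂Ω2` pointing outwards `Ω2`. -/
def n2 (z : RN N) : RN N := gradient D.sd z

end TwoDomains

/-- Time derivative `φ_t` of a test function on `ℝ^N × ℝ`. -/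
def tDeriv {N : ℕ} (φ : RN N × ℝ → ℝ) (x : RN N) (t : ℝ) : ℝ :=
  deriv (fun s => φ (x, s)) t

/-- Spatial gradient `Dφ` of a test function on `ℝ^N × ℝ`. -/
def xGrad {N : ℕ} (φ : RN N × ℝ → ℝ) (x : RN N) (t : ℝ) : RN N :=
  gradient (fun y => φ (y, t)) x

/-- Tangential gradient `D_H φ` along the interface. -/
def tanGrad {N : ℕ} (D : TwoDomains N) (φ : RN N × ℝ → ℝ) (x : RN N) (t : ℝ) : RN N :=
  xGrad φ x t - ⟪xGrad φ x t, D.n1 x⟫ • D.n1 x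

/-- Bounded function of `(x,t)`. -/
def BddFun {N : ℕ} (u : RN N → ℝ → ℝ) : Prop := ∃ M, ∀ x t, |u x t| ≤ M

/-- Upper semicontinuity on `ℝ^N × [0,T]`. -/
def USCFun {N : ℕ} (T : ℝ) (u : RN N → ℝ → ℝ) : Prop :=
  UpperSemicontinuousOn (fun q : RN N × ℝ => u q.1 q.2) ((univ : Set (RN N)) ×ˢ Icc 0 T)

/-- Lower semicontinuity on `ℝ^N × [0,T]`. -/
def LSCFun {N : ℕ} (T : ℝ) (u : RN N → ℝ → ℝ) : Prop :=
  LowerSemicontinuousOn (fun q : RN N × ℝ => u q.1 q.2) ((univ : Set (RN N)) ×ˢ Icc 0 T)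

/-- Upper semicontinuous envelope `u^*` relative to `ℝ^N × [0,T]`. -/
def uscEnv {N : ℕ} (T : ℝ) (u : RN N → ℝ → ℝ) : RN N → ℝ → ℝ := fun x t =>
  limsup (fun q : RN N × ℝ => u q.1 q.2) (nhdsWithin (x, t) ((univ : Set (RN N)) ×ˢ Icc 0 T))

/-- Lower semicontinuous envelope `u_*` relative to `ℝ^N × [0,T]`. -/
def lscEnv {N : ℕ} (T : ℝ) (u : RN N → ℝ → ℝ) : RN N → ℝ → ℝ := fun x t =>
  liminf (fun q : RN N × ℝ => u q.1 q.2) (nhdsWithin (x, t) ((univ : Set (RN N)) ×ˢ Icc 0 T))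

/-- Admissible stopping values `θ` for a trajectory `Y` relative to the open set `Ω`:
either `Y` reaches `∂Ω` at time `θ` having stayed in `cl Ω` before (this encodes
`τ ≤ θ ≤ τ̄` and `Y(θ) ∈ ∂Ω`), or `θ ≥ σ` and the trajectory stayed in `cl Ω`
(this encodes the case where no exit occurs before `σ`). -/
def StopOK {N : ℕ} (Ω : Set (RN N)) (Y : ℝ → RN N) (σ θ : ℝ) : Prop :=
  0 ≤ θ ∧ (∀ s ∈ Ico 0 θ, Y s ∈ closure Ω) ∧ (Y θ ∈ frontier Ω ∨ σ ≤ θ)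

/-- The half-relaxed lower limit `liminf_* v_ε (x,t)`. -/
def liminfStar {N : ℕ} (v : ℝ → RN N → ℝ → ℝ) : RN N → ℝ → ℝ := fun x t =>
  liminf (fun q : ℝ × RN N × ℝ => v q.1 q.2.1 q.2.2) ((nhdsWithin 0 (Ioi 0)) ×ˢ nhds (x, t))

/-- The half-relaxed upper limit `limsup^* u_ε (x,t)`. -/
def limsupStar {N : ℕ} (u : ℝ → RN N → ℝ → ℝ) : RN N → ℝ → ℝ := fun x t =>
  limsup (fun q : ℝ × RN N × ℝ => u q.1 q.2.1 q.2.2) ((nhdsWithin 0 (Ioi 0)) ×ˢ nhds (x, t))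

/-- The controlled dynamics and running costs on the two domains. -/
structure CtrlData (N : ℕ) (A1 A2 : Type) : Type where
  b1 : RN N → ℝ → A1 → RN N
  b2 : RN N → ℝ → A2 → RN N
  l1 : RN N → ℝ → A1 → ℝ
  l2 : RN N → ℝ → A2 → ℝ

namespace CtrlData

variable {N : ℕ} {A1 A2 : Type} [MetricSpace A1] [MetricSpace A2]

section Basic

variable (C : CtrlData N A1 A2) (D : TwoDomains N)

/-- Boundary dynamics `b_H(z,t,(α1,α2,μ)) = μ b1 + (1-μ) b2`. -/
def bH (z : RN N) (t : ℝ) (a : A1 × A2 × ℝ) : RN N :=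
  a.2.2 • C.b1 z t a.1 + (1 - a.2.2) • C.b2 z t a.2.1

/-- Boundary cost `l_H(z,t,(α1,α2,μ)) = μ l1 + (1-μ) l2`. -/
def lH (z : RN N) (t : ℝ) (a : A1 × A2 × ℝ) : ℝ :=
  a.2.2 * C.l1 z t a.1 + (1 - a.2.2) * C.l2 z t a.2.1

/-- Controls whose boundary dynamic is tangent to the interface. -/
def A0 (z : RN N) (t : ℝ) : Set (A1 × A2 × ℝ) :=
  {a | a.2.2 ∈ Icc (0:ℝ) 1 ∧ ⟪C.bH z t a, D.n1 z⟫ = 0}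

/-- Regular tangential controls. -/
def A0reg (z : RN N) (t : ℝ) : Set (A1 × A2 × ℝ) :=
  {a | a ∈ C.A0 D z t ∧ 0 ≤ ⟪C.b1 z t a.1, D.n1 z⟫ ∧ 0 ≤ ⟪C.b2 z t a.2.1, D.n2 z⟫}

open Classical in
/-- The set-valued map `B(z,s)` of the differential inclusion. -/
def Bset (z : RN N) (s : ℝ) : Set (RN N) :=
  if z ∈ D.Ω1 then Set.range (C.b1 z s)
  else if z ∈ D.Ω2 then Set.range (C.b2 z s)
  else closure (convexHull ℝ (Set.range (C.b1 z s) ∪ Set.range (C.b2 z s)))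

open Classical in
/-- The Lagrangian `ℓ`. -/
def lag (z : RN N) (t : ℝ) (a : A1 × A2 × ℝ) : ℝ :=
  if z ∈ D.Ω1 then C.l1 z t a.1 else if z ∈ D.Ω2 then C.l2 z t a.2.1 else C.lH z t a

/-- Hamiltonian `H1`. -/
def Ham1 (x : RN N) (t : ℝ) (p : RN N) : ℝ :=
  sSup (Set.range fun α : A1 => -⟪C.b1 x t α, p⟫ - C.l1 x t α)

/-- Hamiltonian `H2`. -/
def Ham2 (x : RN N) (t : ℝ) (p : RN N) : ℝ :=
  sSup (Set.range fun α : A2 => -⟪C.b2 x t α, p⟫ - C.l2 x t α)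

/-- Tangential Hamiltonian `H_T`. -/
def HamT (z : RN N) (t : ℝ) (p : RN N) : ℝ :=
  sSup ((fun a : A1 × A2 × ℝ => -⟪C.bH z t a, p⟫ - C.lH z t a) '' C.A0 D z t)

/-- Regular tangential Hamiltonian `H_T^reg`. -/
def HamTreg (z : RN N) (t : ℝ) (p : RN N) : ℝ :=
  sSup ((fun a : A1 × A2 × ℝ => -⟪C.bH z t a, p⟫ - C.lH z t a) '' C.A0reg D z t)

/-- Assumption (C1). -/
def HypC1 (T Mb Lb : ℝ) : Prop :=
  ContinuousOn (fun q : RN N × ℝ × A1 => C.b1 q.1 q.2.1 q.2.2)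
      (closure D.Ω1 ×ˢ (Icc 0 T ×ˢ (univ : Set A1))) ∧
  ContinuousOn (fun q : RN N × ℝ × A2 => C.b2 q.1 q.2.1 q.2.2)
      (closure D.Ω2 ×ˢ (Icc 0 T ×ˢ (univ : Set A2))) ∧
  (∀ (x : RN N) (t : ℝ) (α : A1), ‖C.b1 x t α‖ ≤ Mb) ∧
  (∀ (x : RN N) (t : ℝ) (α : A2), ‖C.b2 x t α‖ ≤ Mb) ∧
  (∀ z ∈ closure D.Ω1, ∀ z' ∈ closure D.Ω1, ∀ s ∈ Icc (0:ℝ) T, ∀ s' ∈ Icc (0:ℝ) T, ∀ α : A1,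
      ‖C.b1 z s α - C.b1 z' s' α‖ ≤ Lb * (‖z - z'‖ + |s - s'|)) ∧
  (∀ z ∈ closure D.Ω2, ∀ z' ∈ closure D.Ω2, ∀ s ∈ Icc (0:ℝ) T, ∀ s' ∈ Icc (0:ℝ) T, ∀ α : A2,
      ‖C.b2 z s α - C.b2 z' s' α‖ ≤ Lb * (‖z - z'‖ + |s - s'|))

/-- Assumption (C2); `ml` is the modulus of continuity. -/
def HypC2 (T Ml : ℝ) (ml : ℝ → ℝ) : Prop :=
  (∀ (x : RN N) (t : ℝ) (α : A1), |C.l1 x t α| ≤ Ml) ∧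
  (∀ (x : RN N) (t : ℝ) (α : A2), |C.l2 x t α| ≤ Ml) ∧
  (∀ r, 0 ≤ ml r) ∧ Monotone ml ∧ ml 0 = 0 ∧ ContinuousAt ml 0 ∧
  (∀ z ∈ closure D.Ω1, ∀ z' ∈ closure D.Ω1, ∀ s ∈ Icc (0:ℝ) T, ∀ s' ∈ Icc (0:ℝ) T, ∀ α : A1,
      |C.l1 z s α - C.l1 z' s' α| ≤ ml (‖z - z'‖ + |s - s'|)) ∧
  (∀ z ∈ closure D.Ω2, ∀ z' ∈ closure D.Ω2, ∀ s ∈ Icc (0:ℝ) T, ∀ s' ∈ Icc (0:ℝ) T, ∀ α : A2,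
      |C.l2 z s α - C.l2 z' s' α| ≤ ml (‖z - z'‖ + |s - s'|))

/-- Assumption (C3). -/
def HypC3 (T : ℝ) : Prop :=
  (∀ z ∈ closure D.Ω1, ∀ s ∈ Icc (0:ℝ) T,
      IsClosed (Set.range fun α : A1 => (C.b1 z s α, C.l1 z s α)) ∧
      Convex ℝ (Set.range fun α : A1 => (C.b1 z s α, C.l1 z s α))) ∧
  (∀ z ∈ closure D.Ω2, ∀ s ∈ Icc (0:ℝ) T,
      IsClosed (Set.range fun α : A2 => (C.b2 z s α, C.l2 z s α)) ∧
      Convex ℝ (Set.range fun α : A2 => (C.b2 z s α, C.l2 z s α)))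

/-- Assumption (C4): normal controllability on the interface. -/
def HypC4 (T δ : ℝ) : Prop :=
  0 < δ ∧
  ∀ z ∈ D.H, ∀ s ∈ Icc (0:ℝ) T,
    Icc (-δ) δ ⊆ (Set.range fun α : A1 => ⟪C.b1 z s α, D.n1 z⟫) ∧
    Icc (-δ) δ ⊆ (Set.range fun α : A2 => ⟪C.b2 z s α, D.n2 z⟫)

/-- `Y` solves the ODE `Y' = b1(Y, t-s, α(s))`, `Y(0)=x`. -/
def SolODE1 (x : RN N) (t : ℝ) (α : ℝ → A1) (Y : ℝ → RN N) : Prop :=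
  Y 0 = x ∧ (∃ K : ℝ≥0, LipschitzWith K Y) ∧
  ∀ᵐ s ∂(volume.restrict (Ioo (0:ℝ) t)), HasDerivAt Y (C.b1 (Y s) (t - s) (α s)) s

/-- `Y` solves the ODE `Y' = b2(Y, t-s, α(s))`, `Y(0)=x`. -/
def SolODE2 (x : RN N) (t : ℝ) (α : ℝ → A2) (Y : ℝ → RN N) : Prop :=
  Y 0 = x ∧ (∃ K : ℝ≥0, LipschitzWith K Y) ∧
  ∀ᵐ s ∂(volume.restrict (Ioo (0:ℝ) t)), HasDerivAt Y (C.b2 (Y s) (t - s) (α s)) s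

/-- Viscosity subsolution of `u_t + H(x,t,Du) = 0` in `ℝ^N × (0,T)` (Ishii's definition). -/
def IsSubsol (T : ℝ) (u : RN N → ℝ → ℝ) : Prop :=
  ∀ φ : RN N × ℝ → ℝ, ContDiff ℝ 1 φ → ∀ (x : RN N), ∀ t ∈ Ioo (0:ℝ) T,
    IsLocalMax (fun q : RN N × ℝ => u q.1 q.2 - φ q) (x, t) →
    (x ∈ D.Ω1 → tDeriv φ x t + C.Ham1 x t (xGrad φ x t) ≤ 0) ∧
    (x ∈ D.Ω2 → tDeriv φ x t + C.Ham2 x t (xGrad φ x t) ≤ 0) ∧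
    (x ∈ D.H → tDeriv φ x t + min (C.Ham1 x t (xGrad φ x t)) (C.Ham2 x t (xGrad φ x t)) ≤ 0)

/-- Viscosity supersolution of `u_t + H(x,t,Du) = 0` in `ℝ^N × (0,T)` (Ishii's definition). -/
def IsSupersol (T : ℝ) (v : RN N → ℝ → ℝ) : Prop :=
  ∀ φ : RN N × ℝ → ℝ, ContDiff ℝ 1 φ → ∀ (x : RN N), ∀ t ∈ Ioo (0:ℝ) T,
    IsLocalMin (fun q : RN N × ℝ => v q.1 q.2 - φ q) (x, t) →
    (x ∈ D.Ω1 → 0 ≤ tDeriv φ x t + C.Ham1 x t (xGrad φ x t)) ∧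
    (x ∈ D.Ω2 → 0 ≤ tDeriv φ x t + C.Ham2 x t (xGrad φ x t)) ∧
    (x ∈ D.H → 0 ≤ tDeriv φ x t + max (C.Ham1 x t (xGrad φ x t)) (C.Ham2 x t (xGrad φ x t)))

/-- The complementary subsolution inequality `u_t + H_T(x,t,D_H u) ≤ 0` on `H × (0,T)`,
in the viscosity sense along `H`. -/
def IsSubsolHT (T : ℝ) (u : RN N → ℝ → ℝ) : Prop :=
  ∀ φ : RN N × ℝ → ℝ, ContDiff ℝ 1 φ → ∀ x ∈ D.H, ∀ t ∈ Ioo (0:ℝ) T,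
    (∀ z ∈ D.H, ∀ s ∈ Icc (0:ℝ) T, u z s - φ (z, s) ≤ u x t - φ (x, t)) →
    tDeriv φ x t + C.HamT D x t (tanGrad D φ x t) ≤ 0

/-- The complementary subsolution inequality `u_t + H_T^reg(x,t,D_H u) ≤ 0` on `H × (0,T)`,
in the viscosity sense along `H`. -/
def IsSubsolHTreg (T : ℝ) (u : RN N → ℝ → ℝ) : Prop :=
  ∀ φ : RN N × ℝ → ℝ, ContDiff ℝ 1 φ → ∀ x ∈ D.H, ∀ t ∈ Ioo (0:ℝ) T,
    (∀ z ∈ D.H, ∀ s ∈ Icc (0:ℝ) T, u z s - φ (z, s) ≤ u x t - φ (x, t)) →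
    tDeriv φ x t + C.HamTreg D x t (tanGrad D φ x t) ≤ 0

end Basic

section Traj

variable [MeasurableSpace A1] [MeasurableSpace A2]
variable (C : CtrlData N A1 A2) (D : TwoDomains N)

/-- Admissible controlled trajectories `(X,a) ∈ T_{x,t}`. -/
def IsTraj (x : RN N) (t : ℝ) (X : ℝ → RN N) (a : ℝ → A1 × A2 × ℝ) : Prop :=
  (∃ K : ℝ≥0, LipschitzOnWith K X (Icc 0 t)) ∧ X 0 = x ∧
  Measurable a ∧ (∀ s, (a s).2.2 ∈ Icc (0:ℝ) 1) ∧
  ∀ᵐ s ∂(volume.restrict (Ioo (0:ℝ) t)),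
    (X s ∈ D.Ω1 → HasDerivAt X (C.b1 (X s) (t - s) (a s).1) s) ∧
    (X s ∈ D.Ω2 → HasDerivAt X (C.b2 (X s) (t - s) (a s).2.1) s) ∧
    (X s ∈ D.H → HasDerivAt X (C.bH (X s) (t - s) (a s)) s)

/-- Regular admissible trajectories `(X,a) ∈ T^reg_{x,t}`. -/
def IsRegTraj (x : RN N) (t : ℝ) (X : ℝ → RN N) (a : ℝ → A1 × A2 × ℝ) : Prop :=
  C.IsTraj D x t X a ∧
  ∀ᵐ s ∂(volume.restrict (Ioo (0:ℝ) t)), X s ∈ D.H → a s ∈ C.A0reg D (X s) (t - s)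

/-- The cost functional `J(x,t;(X,a))`. -/
def cost (g : RN N → ℝ) (x : RN N) (t : ℝ) (X : ℝ → RN N) (a : ℝ → A1 × A2 × ℝ) : ℝ :=
  (∫ s in (0:ℝ)..t, C.lag D (X s) (t - s) (a s)) + g (X t)

/-- The value function `U^-`. -/
def Um (g : RN N → ℝ) (x : RN N) (t : ℝ) : ℝ :=
  sInf {r | ∃ X a, C.IsTraj D x t X a ∧ r = C.cost D g x t X a}

/-- The value function `U^+`. -/
def Up (g : RN N → ℝ) (x : RN N) (t : ℝ) : ℝ :=
  sInf {r | ∃ X a, C.IsRegTraj D x t X a ∧ r = C.cost D g x t X a}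

end Traj

end CtrlData

/-- Local uniform convergence of the data `(b1^ε,b2^ε,l1^ε,l2^ε) → (b1,b2,l1,l2)`
on `cl(Ω_i) × [0,T] × A_i` as `ε → 0⁺`. -/
def DataConverges {N : ℕ} {A1 A2 : Type} (D : TwoDomains N) (T : ℝ)
    (Cε : ℝ → CtrlData N A1 A2) (C : CtrlData N A1 A2) : Prop :=
  (∀ K : Set (RN N), IsCompact K → K ⊆ closure D.Ω1 →
    TendstoUniformlyOn (fun ε (q : RN N × ℝ × A1) => (Cε ε).b1 q.1 q.2.1 q.2.2)
      (fun q => C.b1 q.1 q.2.1 q.2.2) (nhdsWithin 0 (Ioi 0))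
      (K ×ˢ (Icc 0 T ×ˢ (univ : Set A1)))) ∧
  (∀ K : Set (RN N), IsCompact K → K ⊆ closure D.Ω2 →
    TendstoUniformlyOn (fun ε (q : RN N × ℝ × A2) => (Cε ε).b2 q.1 q.2.1 q.2.2)
      (fun q => C.b2 q.1 q.2.1 q.2.2) (nhdsWithin 0 (Ioi 0))
      (K ×ˢ (Icc 0 T ×ˢ (univ : Set A2)))) ∧
  (∀ K : Set (RN N), IsCompact K → K ⊆ closure D.Ω1 →
    TendstoUniformlyOn (fun ε (q : RN N × ℝ × A1) => (Cε ε).l1 q.1 q.2.1 q.2.2)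
      (fun q => C.l1 q.1 q.2.1 q.2.2) (nhdsWithin 0 (Ioi 0))
      (K ×ˢ (Icc 0 T ×ˢ (univ : Set A1)))) ∧
  (∀ K : Set (RN N), IsCompact K → K ⊆ closure D.Ω2 →
    TendstoUniformlyOn (fun ε (q : RN N × ℝ × A2) => (Cε ε).l2 q.1 q.2.1 q.2.2)
      (fun q => C.l2 q.1 q.2.1 q.2.2) (nhdsWithin 0 (Ioi 0))
      (K ×ˢ (Icc 0 T ×ˢ (univ : Set A2))))


open TopologicalSpace
open scoped ENNReal

section SelectionHelpers

lemma measurable_ite_restrict {α γ : Type*} [MeasurableSpace α] [MeasurableSpace γ]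
    {E : Set α} (hE : MeasurableSet E) {g1 g2 : α → γ} [DecidablePred (· ∈ E)]
    (h1 : Measurable fun u : E => g1 u) (h2 : Measurable g2) :
    Measurable fun s => if s ∈ E then g1 s else g2 s := by
  intro B hB
  have hset : (fun s => if s ∈ E then g1 s else g2 s) ⁻¹' B
      = (Subtype.val '' ((fun u : E => g1 u) ⁻¹' B)) ∪ (Eᶜ ∩ g2 ⁻¹' B) := by
    ext s
    by_cases hs : s ∈ E <;>
      simp [hs, Set.mem_image, Set.mem_preimage, Subtype.exists]
  rw [hset]
  exact (hE.subtype_image (h1 hB)).union (hE.compl.inter (h2 hB))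

lemma measurable_nat_find {α : Type*} [MeasurableSpace α] {p : α → ℕ → Prop}
    [∀ s, DecidablePred (p s)]
    (hp : ∀ n, MeasurableSet {s | p s n}) (h : ∀ s, ∃ n, p s n) :
    Measurable fun s => Nat.find (h s) := by
  apply measurable_to_countable'
  intro j
  have : (fun s => Nat.find (h s)) ⁻¹' {j}
      = {s | p s j} ∩ ⋂ i, ⋂ _ : i < j, {s | p s i}ᶜ := by
    ext s
    simp only [mem_preimage, mem_singleton_iff, Nat.find_eq_iff, mem_inter_iff, mem_setOf_eq,
      mem_iInter, mem_compl_iff]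
  rw [this]
  exact (hp j).inter (MeasurableSet.iInter fun i => MeasurableSet.iInter fun _ => (hp i).compl)

lemma exists_measurable_argmin {α : Type*} [MeasurableSpace α]
    {A : Type*} [MetricSpace A] [CompactSpace A] [Nonempty A]
    [MeasurableSpace A] [BorelSpace A]
    (Φ : α → A → ℝ≥0∞) (hc : ∀ s, Continuous (Φ s)) (hm : ∀ a, Measurable fun s => Φ s a) :
    ∃ σ : α → A, Measurable σ ∧ ∀ s a, Φ s (σ s) ≤ Φ s a := by
  classical
  haveI : SeparableSpace A := by
    have := isCompact_univ (X := A) |>.isSeparable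
    exact (isSeparable_univ_iff).1 this
  set e : ℕ → A := denseSeq A with he
  have hde : DenseRange e := denseRange_denseSeq A
  set r : ℕ → ℝ := fun k => (1/2 : ℝ) ^ k with hrdef
  have hr : ∀ k, 0 < r k := fun k => by positivity
  set m : α → ℝ≥0∞ := fun s => ⨅ n, Φ s (e n) with hm_def
  have hmm : Measurable m := Measurable.iInf fun n => hm (e n)
  set g : ℕ → ℕ → α → ℝ≥0∞ :=
    fun n k s => ⨅ i : {i // e i ∈ ball (e n) (r k)}, Φ s (e i) with hg_def
  have hgm : ∀ n k, Measurable (g n k) := fun n k => Measurable.iInf fun i => hm (e i)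
  -- inf over dense points of an open set is ≤ value at any point of the set
  have inf_le : ∀ (s : α) (U : Set A), IsOpen U → ∀ a ∈ U,
      (⨅ i : {i // e i ∈ U}, Φ s (e i)) ≤ Φ s a := by
    intro s U hU a haU
    refine ENNReal.le_of_forall_pos_le_add fun ε hε hlt => ?_
    have hV : IsOpen (U ∩ (Φ s) ⁻¹' (Iio (Φ s a + ε))) :=
      hU.inter (isOpen_Iio.preimage (hc s))
    have haV : a ∈ U ∩ (Φ s) ⁻¹' (Iio (Φ s a + ε)) :=
      ⟨haU, ENNReal.lt_add_right hlt.ne (by exact_mod_cast hε.ne')⟩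
    obtain ⟨i, hiU, hilt⟩ := hde.exists_mem_open hV ⟨a, haV⟩
    exact iInf_le_of_le ⟨i, hiU⟩ hilt.le
  have mle : ∀ s a, m s ≤ Φ s a := by
    intro s a
    refine ENNReal.le_of_forall_pos_le_add fun ε hε hlt => ?_
    have hV : IsOpen ((Φ s) ⁻¹' (Iio (Φ s a + ε))) := isOpen_Iio.preimage (hc s)
    have haV : a ∈ (Φ s) ⁻¹' (Iio (Φ s a + ε)) :=
      ENNReal.lt_add_right hlt.ne (by exact_mod_cast hε.ne')
    obtain ⟨i, hilt⟩ := hde.exists_mem_open hV ⟨a, haV⟩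
    exact iInf_le_of_le i hilt.le
  have claimB : ∀ s n k, g n k s ≤ m s → ∃ a, Φ s a ≤ m s ∧ dist a (e n) ≤ r k := by
    intro s n k hgnk
    have hcb : IsCompact (closedBall (e n) (r k)) :=
      (isClosed_closedBall (x := e n) (ε := r k)).isCompact
    obtain ⟨a₀, ha₀mem, ha₀min⟩ :=
      hcb.exists_isMinOn ⟨e n, mem_closedBall_self (hr k).le⟩ (hc s).continuousOn
    refine ⟨a₀, ?_, mem_closedBall.mp ha₀mem⟩
    by_cases hne : Nonempty {i // e i ∈ ball (e n) (r k)}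
    · refine le_trans (le_trans (le_iInf fun i => ?_) hgnk) le_rfl
      exact ha₀min (ball_subset_closedBall i.2)
    · have hmt : m s = ⊤ := by
        have : g n k s = ⊤ := by
          haveI := not_nonempty_iff.mp hne
          simp [hg_def]
        exact top_le_iff.mp (this ▸ hgnk)
      simp [hmt]
  -- base and step existence for the recursion
  have h0 : ∀ s, ∃ n, g n 0 s ≤ m s := by
    intro s
    obtain ⟨a₀, -, ha₀min⟩ :=
      isCompact_univ.exists_isMinOn (univ_nonempty) (hc s).continuousOn
    obtain ⟨n, hn⟩ := hde.exists_dist_lt a₀ (hr 0)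
    have : a₀ ∈ ball (e n) (r 0) := Metric.mem_ball.mpr hn
    refine ⟨n, le_trans (inf_le s _ isOpen_ball a₀ this) (le_iInf fun i => ha₀min trivial)⟩
  have key : ∀ s k (prev : ℕ), g prev k s ≤ m s →
      ∃ n, dist (e n) (e prev) < r k + r (k+1) ∧ g n (k+1) s ≤ m s := by
    intro s k prev hprev
    obtain ⟨a, haS, had⟩ := claimB s prev k hprev
    obtain ⟨n, hn⟩ := hde.exists_dist_lt a (hr (k+1))
    refine ⟨n, ?_, ?_⟩
    · calc dist (e n) (e prev) ≤ dist (e n) a + dist a (e prev) := dist_triangle _ _ _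
        _ < r (k+1) + r k := by rw [dist_comm] at hn; exact add_lt_add_of_lt_of_le hn had
        _ = r k + r (k+1) := add_comm _ _
    · have hmem : a ∈ ball (e n) (r (k+1)) := Metric.mem_ball.mpr hn
      exact le_trans (inf_le s _ isOpen_ball a hmem) haS
  -- the recursive sequence of indices
  let F : ∀ s : α, ∀ k : ℕ, {n : ℕ // g n k s ≤ m s} := fun s =>
    Nat.rec ⟨Nat.find (h0 s), Nat.find_spec (h0 s)⟩
      (fun k p => ⟨Nat.find (key s k p.1 p.2), (Nat.find_spec (key s k p.1 p.2)).2⟩)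
  let nk : ℕ → α → ℕ := fun k s => (F s k).1
  have hnkm : ∀ k, Measurable (nk k) := by
    intro k
    induction k with
    | zero =>
        have : nk 0 = fun s => Nat.find (h0 s) := rfl
        rw [this]
        exact measurable_nat_find (fun n => measurableSet_le (hgm n 0) hmm) h0
    | succ k ih =>
        have hex : ∀ s, ∃ n, dist (e n) (e (nk k s)) < r k + r (k+1) ∧ g n (k+1) s ≤ m s :=
          fun s => key s k (nk k s) (F s k).2
        have : nk (k+1) = fun s => Nat.find (hex s) := rfl
        rw [this]
        refine measurable_nat_find (fun n => ?_) hex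
        have h1 : MeasurableSet (nk k ⁻¹' {v : ℕ | dist (e n) (e v) < r k + r (k+1)}) :=
          ih .of_discrete
        have h2 : MeasurableSet {s | g n (k+1) s ≤ m s} := measurableSet_le (hgm n (k+1)) hmm
        exact h1.inter h2
  let c : ℕ → α → A := fun k s => e (nk k s)
  have hcm : ∀ k, Measurable (c k) := fun k => measurable_from_top.comp (hnkm k)
  have hcdist : ∀ s k, dist (c k s) (c (k+1) s) ≤ 2 * (1/2 : ℝ) ^ k := by
    intro s k
    have := (Nat.find_spec (key s k (nk k s) (F s k).2)).1
    have heq : nk (k+1) s = Nat.find (key s k (nk k s) (F s k).2) := rfl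
    rw [dist_comm]
    refine le_of_lt ?_
    calc dist (c (k+1) s) (c k s) < r k + r (k+1) := by rw [heq] at *; exact this
      _ ≤ 2 * (1/2 : ℝ) ^ k := by
        simp only [hrdef, pow_succ]
        ring_nf
        nlinarith [pow_pos (by norm_num : (0:ℝ) < 1/2) k]
  have hcauchy : ∀ s, CauchySeq (fun k => c k s) :=
    fun s => cauchySeq_of_le_geometric (1/2) 2 (by norm_num) (hcdist s)
  have hlim : ∀ s, ∃ l, Tendsto (fun k => c k s) atTop (𝓝 l) :=
    fun s => cauchySeq_tendsto_of_complete (hcauchy s)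
  refine ⟨fun s => (hlim s).choose, ?_, ?_⟩
  · refine measurable_of_tendsto_metrizable hcm ?_
    rw [tendsto_pi_nhds]
    exact fun s => (hlim s).choose_spec
  · intro s a
    refine le_trans ?_ (mle s a)
    -- σ s is in the (closed) argmin set
    set σs := (hlim s).choose with hσs
    have hten : Tendsto (fun k => c k s) atTop (𝓝 σs) := (hlim s).choose_spec
    have haux : ∀ k, ∃ b, Φ s b ≤ m s ∧ dist b (c k s) ≤ r k :=
      fun k => claimB s (nk k s) k (F s k).2
    let bb : ℕ → A := fun k => (haux k).choose
    have hbb1 : ∀ k, Φ s (bb k) ≤ m s := fun k => (haux k).choose_spec.1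
    have hbb2 : ∀ k, dist (bb k) (c k s) ≤ r k := fun k => (haux k).choose_spec.2
    have htb : Tendsto bb atTop (𝓝 σs) := by
      rw [tendsto_iff_dist_tendsto_zero]
      have hb : ∀ k, dist (bb k) σs ≤ r k + dist (c k s) σs := fun k =>
        le_trans (dist_triangle _ _ _) (by gcongr; exact hbb2 k)
      have hlim0 : Tendsto (fun k => r k + dist (c k s) σs) atTop (𝓝 0) := by
        have h1 : Tendsto r atTop (𝓝 0) :=
          tendsto_pow_atTop_nhds_zero_of_lt_one (by norm_num) (by norm_num)
        have h2 : Tendsto (fun k => dist (c k s) σs) atTop (𝓝 0) :=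
          tendsto_iff_dist_tendsto_zero.mp hten
        simpa using h1.add h2
      exact squeeze_zero (fun k => dist_nonneg) hb hlim0
    have hclosed : IsClosed {b : A | Φ s b ≤ m s} := isClosed_Iic.preimage (hc s)
    exact hclosed.mem_of_tendsto htb (Eventually.of_forall hbb1)

end SelectionHelpers

/-- Theorem `def:dyn` (ii): any Lipschitz solution of the differential
inclusion can be represented by a measurable control `a = (α1, α2, μ)`. -/
theorem statement1
    {N : ℕ} (D : TwoDomains N) (T : ℝ) (hT : 0 < T)
    {A1 A2 : Type} [MetricSpace A1] [CompactSpace A1] [Nonempty A1]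
    [MetricSpace A2] [CompactSpace A2] [Nonempty A2]
    [MeasurableSpace A1] [BorelSpace A1] [MeasurableSpace A2] [BorelSpace A2]
    (C : CtrlData N A1 A2) (Mb Lb Ml : ℝ) (ml : ℝ → ℝ)
    (hC1 : C.HypC1 D T Mb Lb) (hC2 : C.HypC2 D T Ml ml) (hC3 : C.HypC3 D T)
    :
    ∀ (x : RN N), ∀ t ∈ Ico (0:ℝ) T, ∀ X : ℝ → RN N,
      (∃ K : ℝ≥0, LipschitzOnWith K X (Icc 0 t)) → X 0 = x →
      (∀ᵐ s ∂(volume.restrict (Ioo (0:ℝ) t)),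
        ∃ v ∈ C.Bset D (X s) (t - s), HasDerivAt X v s) →
      ∃ a : ℝ → A1 × A2 × ℝ, C.IsTraj D x t X a := by
  classical
  intro x t ht X hXlip hX0 hae
  obtain ⟨K, hlip⟩ := hXlip
  have ht0 : (0:ℝ) ≤ t := ht.1
  have htT : t < T := ht.2
  set f : ℝ → RN N := deriv X with hf_def
  have hfm : Measurable f := measurable_deriv X
  set Y : ℝ → RN N := fun s => X (max 0 (min s t)) with hY_def
  have hYc : Continuous Y := by
    have hXc : ContinuousOn X (Icc 0 t) := hlip.continuousOn
    refine hXc.comp_continuous (by fun_prop) fun s => ?_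
    exact ⟨le_max_left _ _, max_le ht0 (min_le_right _ _)⟩
  have hYX : ∀ s ∈ Ioo (0:ℝ) t, Y s = X s := by
    intro s hs
    simp [hY_def, min_eq_left hs.2.le, max_eq_right hs.1.le]
  set E1 : Set ℝ := Ioo 0 t ∩ Y ⁻¹' D.Ω1 with hE1
  set E2 : Set ℝ := Ioo 0 t ∩ Y ⁻¹' D.Ω2 with hE2
  set E3 : Set ℝ := Ioo 0 t \ (E1 ∪ E2) with hE3
  have hE1o : IsOpen E1 := isOpen_Ioo.inter (D.open1.preimage hYc)
  have hE2o : IsOpen E2 := isOpen_Ioo.inter (D.open2.preimage hYc)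
  have hE3m : MeasurableSet E3 :=
    measurableSet_Ioo.diff (hE1o.measurableSet.union hE2o.measurableSet)
  have hIccT : ∀ s ∈ Ioo (0:ℝ) t, t - s ∈ Icc (0:ℝ) T := fun s hs =>
    ⟨by linarith [hs.2], by linarith [hs.1]⟩
  have hfr3 : ∀ s ∈ E3, Y s ∈ frontier D.Ω1 := by
    intro s hs
    have h1 : Y s ∉ D.Ω1 := fun h => hs.2 (Or.inl ⟨hs.1, h⟩)
    have h2 : Y s ∉ D.Ω2 := fun h => hs.2 (Or.inr ⟨hs.1, h⟩)
    have hcov : Y s ∈ D.Ω1 ∪ D.Ω2 ∪ frontier D.Ω1 := D.cover ▸ mem_univ _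
    rcases hcov with (h | h) | h
    · exact absurd h h1
    · exact absurd h h2
    · exact h
  have hE3cl : ∀ s ∈ E3, Y s ∈ closure D.Ω1 ∧ Y s ∈ closure D.Ω2 := fun s hs =>
    ⟨frontier_subset_closure (hfr3 s hs),
     frontier_subset_closure (D.frontier_eq ▸ hfr3 s hs)⟩
  -- slices of the dynamics are continuous in the control
  have hslice1 : ∀ z ∈ closure D.Ω1, ∀ τ ∈ Icc (0:ℝ) T,
      Continuous fun α : A1 => C.b1 z τ α := by
    intro z hz τ hτ
    exact hC1.1.comp_continuous
      (continuous_const.prodMk (continuous_const.prodMk continuous_id))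
      fun α => ⟨hz, hτ, trivial⟩
  have hslice2 : ∀ z ∈ closure D.Ω2, ∀ τ ∈ Icc (0:ℝ) T,
      Continuous fun α : A2 => C.b2 z τ α := by
    intro z hz τ hτ
    exact hC1.2.1.comp_continuous
      (continuous_const.prodMk (continuous_const.prodMk continuous_id))
      fun α => ⟨hz, hτ, trivial⟩
  -- the compact control space
  haveI : Nonempty (Icc (0:ℝ) 1) := ⟨⟨0, left_mem_Icc.mpr zero_le_one⟩⟩
  haveI : CompactSpace (Icc (0:ℝ) 1) := isCompact_iff_compactSpace.mp isCompact_Icc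
  set β : ℝ → A1 × A2 × (Icc (0:ℝ) 1) → RN N := fun s a =>
    if s ∈ E1 then C.b1 (Y s) (t - s) a.1
    else if s ∈ E2 then C.b2 (Y s) (t - s) a.2.1
    else if s ∈ E3 then C.bH (Y s) (t - s) (a.1, a.2.1, (a.2.2 : ℝ))
    else f s with hβ_def
  set Φ : ℝ → A1 × A2 × (Icc (0:ℝ) 1) → ℝ≥0∞ := fun s a => edist (β s a) (f s) with hΦ_def
  have hβc : ∀ s, Continuous fun a => β s a := by
    intro s
    by_cases h1 : s ∈ E1
    · have he : (fun a => β s a) = fun a : A1 × A2 × (Icc (0:ℝ) 1) =>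
          C.b1 (Y s) (t - s) a.1 := by funext a; simp [hβ_def, h1]
      rw [he]
      exact (hslice1 (Y s) (subset_closure h1.2) (t - s) (hIccT s h1.1)).comp continuous_fst
    by_cases h2 : s ∈ E2
    · have he : (fun a => β s a) = fun a : A1 × A2 × (Icc (0:ℝ) 1) =>
          C.b2 (Y s) (t - s) a.2.1 := by funext a; simp [hβ_def, h1, h2]
      rw [he]
      exact (hslice2 (Y s) (subset_closure h2.2) (t - s) (hIccT s h2.1)).comp
        (continuous_fst.comp continuous_snd)
    by_cases h3 : s ∈ E3
    · have he : (fun a => β s a) = fun a : A1 × A2 × (Icc (0:ℝ) 1) =>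
          ((a.2.2 : ℝ)) • C.b1 (Y s) (t - s) a.1
            + (1 - (a.2.2 : ℝ)) • C.b2 (Y s) (t - s) a.2.1 := by
        funext a; simp [hβ_def, h1, h2, h3, CtrlData.bH]
      rw [he]
      have hb1 := hslice1 (Y s) (hE3cl s h3).1 (t - s) (hIccT s h3.1)
      have hb2 := hslice2 (Y s) (hE3cl s h3).2 (t - s) (hIccT s h3.1)
      have hμ : Continuous fun a : A1 × A2 × (Icc (0:ℝ) 1) => ((a.2.2 : ℝ)) :=
        continuous_subtype_val.comp (continuous_snd.comp continuous_snd)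
      exact (hμ.smul (hb1.comp continuous_fst)).add
        ((continuous_const.sub hμ).smul (hb2.comp (continuous_fst.comp continuous_snd)))
    · have he : (fun a => β s a) = fun _ => f s := by funext a; simp [hβ_def, h1, h2, h3]
      rw [he]; exact continuous_const
  have hΦc : ∀ s, Continuous (Φ s) := fun s => (hβc s).edist continuous_const
  have hβm : ∀ a, Measurable fun s => β s a := by
    intro a
    apply measurable_ite_restrict hE1o.measurableSet
    · have : Continuous fun u : E1 => C.b1 (Y ↑u) (t - ↑u) a.1 := by
        refine hC1.1.comp_continuous
          ((hYc.comp continuous_subtype_val).prodMk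
            (((continuous_const.sub continuous_subtype_val)).prodMk continuous_const))
          fun u => ?_
        exact ⟨subset_closure u.2.2, hIccT ↑u u.2.1, trivial⟩
      exact this.measurable
    apply measurable_ite_restrict hE2o.measurableSet
    · have : Continuous fun u : E2 => C.b2 (Y ↑u) (t - ↑u) a.2.1 := by
        refine hC1.2.1.comp_continuous
          ((hYc.comp continuous_subtype_val).prodMk
            (((continuous_const.sub continuous_subtype_val)).prodMk continuous_const))
          fun u => ?_
        exact ⟨subset_closure u.2.2, hIccT ↑u u.2.1, trivial⟩
      exact this.measurable
    apply measurable_ite_restrict hE3m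
    · have : Continuous fun u : E3 =>
          C.bH (Y ↑u) (t - ↑u) (a.1, a.2.1, (a.2.2 : ℝ)) := by
        have hb1 : Continuous fun u : E3 => C.b1 (Y ↑u) (t - ↑u) a.1 := by
          refine hC1.1.comp_continuous
            ((hYc.comp continuous_subtype_val).prodMk
              (((continuous_const.sub continuous_subtype_val)).prodMk continuous_const))
            fun u => ?_
          exact ⟨(hE3cl ↑u u.2).1, hIccT ↑u u.2.1, trivial⟩
        have hb2 : Continuous fun u : E3 => C.b2 (Y ↑u) (t - ↑u) a.2.1 := by
          refine hC1.2.1.comp_continuous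
            ((hYc.comp continuous_subtype_val).prodMk
              (((continuous_const.sub continuous_subtype_val)).prodMk continuous_const))
            fun u => ?_
          exact ⟨(hE3cl ↑u u.2).2, hIccT ↑u u.2.1, trivial⟩
        simp only [CtrlData.bH]
        exact ((continuous_const (y := (a.2.2 : ℝ))).smul hb1).add
          ((continuous_const (y := (1 - (a.2.2 : ℝ)))).smul hb2)
      exact this.measurable
    exact hfm
  have hΦm : ∀ a, Measurable fun s => Φ s a := fun a => (hβm a).edist hfm
  obtain ⟨σ, hσm, hσmin⟩ := exists_measurable_argmin Φ hΦc hΦm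
  refine ⟨fun s => ((σ s).1, (σ s).2.1, ((σ s).2.2 : ℝ)), ⟨K, hlip⟩, hX0, ?_, ?_, ?_⟩
  · have hco : Measurable fun p : A1 × A2 × (Icc (0:ℝ) 1) => (p.1, p.2.1, (p.2.2 : ℝ)) := by
      fun_prop
    exact hco.comp hσm
  · exact fun s => (σ s).2.2.2
  · filter_upwards [hae, ae_restrict_mem measurableSet_Ioo] with s hv hsI
    obtain ⟨v, hvB, hvd⟩ := hv
    have hfs : f s = v := hvd.deriv
    have hYs : Y s = X s := hYX s hsI
    have main : (∃ a₀, β s a₀ = v) → β s (σ s) = v := by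
      rintro ⟨a₀, ha₀⟩
      have h0 : Φ s a₀ = 0 := by
        simp only [hΦ_def, ha₀, hfs, edist_self]
      have hle := hσmin s a₀
      rw [h0, le_zero_iff] at hle
      have : β s (σ s) = f s := edist_eq_zero.mp hle
      rw [this, hfs]
    by_cases h1 : X s ∈ D.Ω1
    · have hsE1 : s ∈ E1 := ⟨hsI, by rw [mem_preimage, hYs]; exact h1⟩
      have hvB' : v ∈ Set.range (C.b1 (X s) (t - s)) := by
        simpa [CtrlData.Bset, h1] using hvB
      obtain ⟨α₁, hα⟩ := hvB'
      have hβσ : β s (σ s) = v :=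
        main ⟨(α₁, Classical.arbitrary A2, ⟨0, left_mem_Icc.mpr zero_le_one⟩),
          by simp [hβ_def, hsE1, hYs, hα]⟩
      have hval : C.b1 (X s) (t - s) (σ s).1 = v := by
        rw [← hβσ]; simp [hβ_def, hsE1, hYs]
      refine ⟨fun _ => hval ▸ hvd, fun h2 => absurd h2 (disjoint_left.mp D.disj h1),
        fun hH => ?_⟩
      have hH' : X s ∈ frontier D.Ω1 := hH
      rw [D.open1.frontier_eq] at hH'
      exact absurd h1 hH'.2
    by_cases h2 : X s ∈ D.Ω2
    · have hsE2 : s ∈ E2 := ⟨hsI, by rw [mem_preimage, hYs]; exact h2⟩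
      have hnE1 : s ∉ E1 := fun h => disjoint_left.mp D.disj (hYs ▸ h.2) h2
      have hvB' : v ∈ Set.range (C.b2 (X s) (t - s)) := by
        simpa [CtrlData.Bset, h1, h2] using hvB
      obtain ⟨α₂, hα⟩ := hvB'
      have hβσ : β s (σ s) = v :=
        main ⟨(Classical.arbitrary A1, α₂, ⟨0, left_mem_Icc.mpr zero_le_one⟩),
          by simp [hβ_def, hnE1, hsE2, hYs, hα]⟩
      have hval : C.b2 (X s) (t - s) (σ s).2.1 = v := by
        rw [← hβσ]; simp [hβ_def, hnE1, hsE2, hYs]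
      refine ⟨fun h1' => absurd h1' h1, fun _ => hval ▸ hvd, fun hH => ?_⟩
      have hH' : X s ∈ frontier D.Ω1 := hH
      rw [D.frontier_eq, D.open2.frontier_eq] at hH'
      exact absurd h2 hH'.2
    · -- interface case
      have hnE1 : s ∉ E1 := fun h => h1 (hYs ▸ h.2)
      have hnE2 : s ∉ E2 := fun h => h2 (hYs ▸ h.2)
      have hsE3 : s ∈ E3 := ⟨hsI, fun h => h.elim hnE1 hnE2⟩
      have hz1 : X s ∈ closure D.Ω1 := hYs ▸ (hE3cl s hsE3).1
      have hz2 : X s ∈ closure D.Ω2 := hYs ▸ (hE3cl s hsE3).2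
      have hτ : t - s ∈ Icc (0:ℝ) T := hIccT s hsI
      have hvB' : v ∈ closure (convexHull ℝ
          (Set.range (C.b1 (X s) (t - s)) ∪ Set.range (C.b2 (X s) (t - s)))) := by
        simpa [CtrlData.Bset, h1, h2] using hvB
      set K1 := Set.range (C.b1 (X s) (t - s)) with hK1def
      set K2 := Set.range (C.b2 (X s) (t - s)) with hK2def
      have hK1c : IsCompact K1 := isCompact_range (hslice1 _ hz1 _ hτ)
      have hK2c : IsCompact K2 := isCompact_range (hslice2 _ hz2 _ hτ)
      have hK1cv : Convex ℝ K1 := by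
        have hcv := (hC3.1 (X s) hz1 (t - s) hτ).2
        have heq : K1 = (LinearMap.fst ℝ (RN N) ℝ) ''
            (Set.range fun α : A1 => (C.b1 (X s) (t - s) α, C.l1 (X s) (t - s) α)) := by
          ext w
          simp [hK1def, Set.range, LinearMap.fst_apply]
        rw [heq]
        exact hcv.linear_image _
      have hK2cv : Convex ℝ K2 := by
        have hcv := (hC3.2 (X s) hz2 (t - s) hτ).2
        have heq : K2 = (LinearMap.fst ℝ (RN N) ℝ) ''
            (Set.range fun α : A2 => (C.b2 (X s) (t - s) α, C.l2 (X s) (t - s) α)) := by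
          ext w
          simp [hK2def, Set.range, LinearMap.fst_apply]
        rw [heq]
        exact hcv.linear_image _
      set J := (fun w : ℝ × RN N × RN N => w.1 • w.2.1 + (1 - w.1) • w.2.2) ''
        (Icc (0:ℝ) 1 ×ˢ K1 ×ˢ K2) with hJdef
      have hJc : IsCompact J :=
        (isCompact_Icc.prod (hK1c.prod hK2c)).image (by fun_prop)
      have hsub : convexHull ℝ (K1 ∪ K2) ⊆ J := by
        rw [Convex.convexHull_union hK1cv hK2cv (Set.range_nonempty _) (Set.range_nonempty _)]
        intro w hw
        obtain ⟨p, hp, q, hq, hseg⟩ := mem_convexJoin.mp hw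
        obtain ⟨u, w', hu, hw', huw, hsum⟩ := hseg
        refine ⟨(u, p, q), ⟨⟨hu, by linarith⟩, hp, hq⟩, ?_⟩
        simp only
        rw [show (1:ℝ) - u = w' by linarith]
        exact hsum
      have hvJ : v ∈ J := closure_minimal hsub hJc.isClosed hvB'
      obtain ⟨⟨u, p, q⟩, ⟨humem, hp, hq⟩, hvsum⟩ := hvJ
      obtain ⟨α₁, hα₁⟩ := hp
      obtain ⟨α₂, hα₂⟩ := hq
      have hβσ : β s (σ s) = v := by
        refine main ⟨(α₁, α₂, ⟨u, humem⟩), ?_⟩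
        simp only [hβ_def, if_neg hnE1, if_neg hnE2, if_pos hsE3]
        show C.bH (Y s) (t - s) (α₁, α₂, u) = v
        rw [hYs]
        show u • C.b1 (X s) (t - s) α₁ + (1 - u) • C.b2 (X s) (t - s) α₂ = v
        rw [hα₁, hα₂]
        exact hvsum
      have hval : C.bH (X s) (t - s) ((σ s).1, (σ s).2.1, ((σ s).2.2 : ℝ)) = v := by
        rw [← hβσ]
        simp only [hβ_def, if_neg hnE1, if_neg hnE2, if_pos hsE3, hYs]
      refine ⟨fun h1' => absurd h1' h1, fun h2' => absurd h2' h2, fun _ => hval ▸ hvd⟩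
end
end

section
/- (Coercivity in the normal direction) Let N ≥ 1, let A be a compact metric space, let δ, M_b, M_l > 0, and let b : A → R^N and l : A → R be continuous with |b(α)| ≤ M_b and |l(α)| ≤ M_l for all α ∈ A, and such that {b(α)·e_N : α ∈ A} contains the interval [-δ, δ], where e_N is the N-th standard basis vector. Then for every p ∈ R^N, writing p = (p', p_N) ∈ R^{N-1} × R, one has sup_{α ∈ A} { -b(α)·p - l(α) } ≥ δ |p_N| - C_M (1 + |p'|), where C_M = max(M_b, M_l). -/
open Set
open scoped RealInnerProductSpace

noncomputable section

/-- Lemma `coer:H`, flat case: coercivity of the Hamiltonian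
`H(p) = sup_α {-b(α)·p - l(α)}` in the normal direction `e_N`, under the normal
controllability hypothesis `{b(α)·e_N : α ∈ A} ⊇ [-δ, δ]`. Here, for
`p ∈ ℝ^N = ℝ^{m+1}`, `p_N = p (Fin.last m)` is the last coordinate and
`√(∑ i, p_i²)` (over the first `m` coordinates) is `|p'|`. -/
theorem statement16 (m : ℕ) (A : Type) [MetricSpace A] [CompactSpace A] [Nonempty A]
    (δ Mb Ml : ℝ) (hδ : 0 < δ) (hMb : 0 < Mb) (hMl : 0 < Ml)
    (b : A → EuclideanSpace ℝ (Fin (m + 1))) (l : A → ℝ)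
    (hbc : Continuous b) (hlc : Continuous l)
    (hbM : ∀ α, ‖b α‖ ≤ Mb) (hlM : ∀ α, |l α| ≤ Ml)
    (hctrl : Icc (-δ) δ ⊆ Set.range fun α =>
      ⟪b α, EuclideanSpace.single (Fin.last m) (1:ℝ)⟫) :
    ∀ p : EuclideanSpace ℝ (Fin (m + 1)),
      δ * |p (Fin.last m)| -
          max Mb Ml * (1 + Real.sqrt (∑ i : Fin m, (p i.castSucc) ^ 2)) ≤
        sSup (Set.range fun α => -⟪b α, p⟫ - l α) := by
  intro p
  set eN : EuclideanSpace ℝ (Fin (m + 1)) := EuclideanSpace.single (Fin.last m) (1:ℝ)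
  set pN : ℝ := p (Fin.last m) with hpN
  -- choose α with b α · eN = -δ * sign
  have hsmem : (if 0 ≤ pN then -δ else δ) ∈ Icc (-δ) δ := by
    constructor <;> split <;> linarith
  obtain ⟨α, hα'⟩ := hctrl hsmem
  have hα : ⟪b α, eN⟫ = (if 0 ≤ pN then -δ else δ) := hα'
  -- the range is bounded above
  have hbdd : BddAbove (Set.range fun α => -⟪b α, p⟫ - l α) := by
    refine ⟨Mb * ‖p‖ + Ml, ?_⟩
    rintro x ⟨β, rfl⟩
    have h1 : |⟪b β, p⟫| ≤ Mb * ‖p‖ := by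
      calc |⟪b β, p⟫| ≤ ‖b β‖ * ‖p‖ := abs_real_inner_le_norm _ _
        _ ≤ Mb * ‖p‖ := by gcongr; exact hbM β
    have h2 := hlM β
    have := abs_le.mp h1
    have := abs_le.mp h2
    simp only []
    linarith [this.1]
  refine le_trans ?_ (le_csSup hbdd ⟨α, rfl⟩)
  -- decompose p = q + pN • eN
  set q : EuclideanSpace ℝ (Fin (m + 1)) := p - pN • eN with hq
  have hqlast : q (Fin.last m) = 0 := by
    simp [hq, eN, EuclideanSpace.single_apply, hpN]
  have hqcast : ∀ i : Fin m, q i.castSucc = p i.castSucc := by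
    intro i
    have : (i.castSucc : Fin (m+1)) ≠ Fin.last m := (Fin.castSucc_lt_last i).ne
    simp [hq, eN, EuclideanSpace.single_apply, this]
  have hinner : ⟪b α, p⟫ = ⟪b α, q⟫ + pN * ⟪b α, eN⟫ := by
    have : p = q + pN • eN := by simp [hq]
    rw [this, inner_add_right, real_inner_smul_right]
  have hqnorm : ‖q‖ = Real.sqrt (∑ i : Fin m, (p i.castSucc) ^ 2) := by
    rw [EuclideanSpace.norm_eq]
    congr 1
    rw [Fin.sum_univ_castSucc]
    simp [hqlast, hqcast, sq_abs]
  have hbq : |⟪b α, q⟫| ≤ Mb * ‖q‖ := by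
    calc |⟪b α, q⟫| ≤ ‖b α‖ * ‖q‖ := abs_real_inner_le_norm _ _
      _ ≤ Mb * ‖q‖ := by gcongr; exact hbM α
  have hterm : -(pN * ⟪b α, eN⟫) = δ * |pN| := by
    rw [hα]
    by_cases h : 0 ≤ pN
    · simp only [if_pos h, abs_of_nonneg h]; ring
    · simp only [if_neg h, abs_of_neg (not_le.mp h)]; ring
  have hM1 : Mb ≤ max Mb Ml := le_max_left _ _
  have hM2 : Ml ≤ max Mb Ml := le_max_right _ _
  have hl := abs_le.mp (hlM α)
  have hbq' := abs_le.mp hbq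
  have hqnn : (0:ℝ) ≤ ‖q‖ := norm_nonneg _
  have : -⟪b α, p⟫ - l α = -⟪b α, q⟫ + δ * |pN| - l α := by
    rw [hinner]; linarith [hterm]
  show _ ≤ -⟪b α, p⟫ - l α
  rw [this, ← hqnorm]
  nlinarith [hbq'.1, hl.2, mul_le_mul_of_nonneg_right hM1 hqnn]
end
end

section
/- (Lipschitz regularity of the tangential Hamiltonian) Assume (Ω) and (C1)-(C4), let L_n be a Lipschitz constant of the unit normal field n_1 on H, and set C̄ = L_b + M_b L_n, M = L_b + 2 M_b C̄ δ^{-1}, and m(r) = (L_b + 2 M_l C̄ δ^{-1}) r + m_l(r) for r ≥ 0. Then for any z, z' ∈ H, t, t' ∈ [0,T] and any tangent vectors p_H ∈ T_z H and q_H ∈ T_{z'} H (i.e. vectors of R^N orthogonal to n_1(z) and n_1(z') respectively), one has |H_T(z,t,p_H) - H_T(z',t',q_H)| ≤ M |(z,t) - (z',t')| (|p_H| + |q_H|) + M_b |p_H - q_H| + m(|(z,t) - (z',t')|). -/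
open Set Metric MeasureTheory Filter Topology
open scoped RealInnerProductSpace NNReal

noncomputable section

section Aux

variable {N : ℕ} {A1 A2 : Type} [MetricSpace A1] [MetricSpace A2]
variable [Nonempty A1] [Nonempty A2]

private lemma convex_range_combo {α : Type} [Nonempty α]
    {f : α → RN N} {g : α → ℝ}
    (hconv : Convex ℝ (Set.range fun x => (f x, g x)))
    {c1 c2 : ℝ} (hc1 : 0 ≤ c1) (hc2 : 0 ≤ c2) (x1 x2 : α) :
    ∃ y : α, (c1 + c2) • f y = c1 • f x1 + c2 • f x2 ∧
      (c1 + c2) * g y = c1 * g x1 + c2 * g x2 := by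
  rcases eq_or_lt_of_le (by positivity : (0:ℝ) ≤ c1 + c2) with h | h
  · have h1 : c1 = 0 := by linarith
    have h2 : c2 = 0 := by linarith
    exact ⟨Classical.arbitrary α, by simp [h1, h2, ← h], by simp [h1, h2, ← h]⟩
  · have hmem := hconv (Set.mem_range_self (f := fun x => (f x, g x)) x1)
      (Set.mem_range_self (f := fun x => (f x, g x)) x2)
      (div_nonneg hc1 h.le) (div_nonneg hc2 h.le)
      (by field_simp)
    obtain ⟨y, hy⟩ := hmem
    have h1 : f y = (c1 / (c1 + c2)) • f x1 + (c2 / (c1 + c2)) • f x2 := by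
      have := congrArg Prod.fst hy; simpa using this
    have h2 : g y = (c1 / (c1 + c2)) * g x1 + (c2 / (c1 + c2)) * g x2 := by
      have := congrArg Prod.snd hy; simpa using this
    refine ⟨y, ?_, ?_⟩
    · rw [h1, smul_add, smul_smul, smul_smul]
      rw [mul_div_cancel₀ _ h.ne', mul_div_cancel₀ _ h.ne']
    · rw [h2]; field_simp

private lemma bH_combo (C : CtrlData N A1 A2) {z : RN N} {t : ℝ}
    (h1 : Convex ℝ (Set.range fun α : A1 => (C.b1 z t α, C.l1 z t α)))
    (h2 : Convex ℝ (Set.range fun α : A2 => (C.b2 z t α, C.l2 z t α)))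
    (a a'' : A1 × A2 × ℝ) (ha : a.2.2 ∈ Set.Icc (0:ℝ) 1)
    (ha'' : a''.2.2 ∈ Set.Icc (0:ℝ) 1)
    {θ : ℝ} (hθ : θ ∈ Set.Icc (0:ℝ) 1) :
    ∃ a' : A1 × A2 × ℝ, a'.2.2 ∈ Set.Icc (0:ℝ) 1 ∧
      C.bH z t a' = θ • C.bH z t a + (1 - θ) • C.bH z t a'' ∧
      C.lH z t a' = θ * C.lH z t a + (1 - θ) * C.lH z t a'' := by
  obtain ⟨α1, α2, μ⟩ := a
  obtain ⟨β1, β2, ν⟩ := a''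
  simp only at ha ha'' ⊢
  obtain ⟨hμ0, hμ1⟩ := ha
  obtain ⟨hν0, hν1⟩ := ha''
  obtain ⟨hθ0, hθ1⟩ := hθ
  have hc1 : 0 ≤ θ * μ := mul_nonneg hθ0 hμ0
  have hc2 : 0 ≤ (1 - θ) * ν := mul_nonneg (by linarith) hν0
  have hd1 : 0 ≤ θ * (1 - μ) := mul_nonneg hθ0 (by linarith)
  have hd2 : 0 ≤ (1 - θ) * (1 - ν) := mul_nonneg (by linarith) (by linarith)
  obtain ⟨y1, hy1b, hy1l⟩ := convex_range_combo h1 hc1 hc2 α1 β1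
  obtain ⟨y2, hy2b, hy2l⟩ := convex_range_combo h2 hd1 hd2 α2 β2
  set μ' : ℝ := θ * μ + (1 - θ) * ν with hμ'
  have hsum : θ * (1 - μ) + (1 - θ) * (1 - ν) = 1 - μ' := by ring
  rw [hsum] at hy2b hy2l
  refine ⟨(y1, y2, μ'), ⟨by positivity, by nlinarith⟩, ?_, ?_⟩
  · show μ' • C.b1 z t y1 + (1 - μ') • C.b2 z t y2 = _
    rw [hy1b, hy2b]
    simp only [CtrlData.bH, smul_add, smul_smul]
    module
  · show μ' * C.l1 z t y1 + (1 - μ') * C.l2 z t y2 = _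
    rw [hy1l, hy2l]
    simp only [CtrlData.lH]
    ring

variable (D : TwoDomains N) (C : CtrlData N A1 A2)

private lemma mem_cl1 {z : RN N} (hz : z ∈ D.H) : z ∈ closure D.Ω1 :=
  frontier_subset_closure hz

private lemma mem_cl2 {z : RN N} (hz : z ∈ D.H) : z ∈ closure D.Ω2 := by
  have : z ∈ frontier D.Ω2 := by rwa [← D.frontier_eq]
  exact frontier_subset_closure this

private lemma n1_norm {z : RN N} (hz : z ∈ D.H) : ‖D.n1 z‖ = 1 := by
  have : z ∈ D.nbhd := D.frontier_sub_nbhd hz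
  simp only [TwoDomains.n1, norm_neg]
  exact D.sd_grad_norm z this

private lemma n2_eq {z : RN N} : D.n2 z = -D.n1 z := by
  simp [TwoDomains.n1, TwoDomains.n2]

private lemma bH_norm_le {Mb : ℝ}
    (hb1 : ∀ (x : RN N) (t : ℝ) (α : A1), ‖C.b1 x t α‖ ≤ Mb)
    (hb2 : ∀ (x : RN N) (t : ℝ) (α : A2), ‖C.b2 x t α‖ ≤ Mb)
    {z : RN N} {t : ℝ} {a : A1 × A2 × ℝ} (ha : a.2.2 ∈ Set.Icc (0:ℝ) 1) :
    ‖C.bH z t a‖ ≤ Mb := by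
  obtain ⟨h0, h1⟩ := ha
  calc ‖C.bH z t a‖ ≤ ‖a.2.2 • C.b1 z t a.1‖ + ‖(1 - a.2.2) • C.b2 z t a.2.1‖ :=
        norm_add_le _ _
    _ = a.2.2 * ‖C.b1 z t a.1‖ + (1 - a.2.2) * ‖C.b2 z t a.2.1‖ := by
        rw [norm_smul, norm_smul, Real.norm_eq_abs, Real.norm_eq_abs,
          abs_of_nonneg h0, abs_of_nonneg (by linarith)]
    _ ≤ a.2.2 * Mb + (1 - a.2.2) * Mb := by
        linarith [mul_le_mul_of_nonneg_left (hb1 z t a.1) h0,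
          mul_le_mul_of_nonneg_left (hb2 z t a.2.1) (sub_nonneg.2 h1)]
    _ = Mb := by ring

private lemma lH_abs_le {Ml : ℝ}
    (hl1 : ∀ (x : RN N) (t : ℝ) (α : A1), |C.l1 x t α| ≤ Ml)
    (hl2 : ∀ (x : RN N) (t : ℝ) (α : A2), |C.l2 x t α| ≤ Ml)
    {z : RN N} {t : ℝ} {a : A1 × A2 × ℝ} (ha : a.2.2 ∈ Set.Icc (0:ℝ) 1) :
    |C.lH z t a| ≤ Ml := by
  obtain ⟨h0, h1⟩ := ha
  calc |C.lH z t a| ≤ |a.2.2 * C.l1 z t a.1| + |(1 - a.2.2) * C.l2 z t a.2.1| :=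
        abs_add_le _ _
    _ ≤ Ml := by
        rw [abs_mul, abs_mul, abs_of_nonneg h0,
          abs_of_nonneg (show (0:ℝ) ≤ 1 - a.2.2 by linarith)]
        nlinarith [hl1 z t a.1, hl2 z t a.2.1, abs_nonneg (C.l1 z t a.1),
          abs_nonneg (C.l2 z t a.2.1)]

end Aux
section Core

variable {N : ℕ} {A1 A2 : Type} [MetricSpace A1] [MetricSpace A2]
variable [Nonempty A1] [Nonempty A2]

private lemma bH_lip (C : CtrlData N A1 A2) (D : TwoDomains N) {T Lb : ℝ}
    (hb1L : ∀ z ∈ closure D.Ω1, ∀ z' ∈ closure D.Ω1, ∀ s ∈ Icc (0:ℝ) T,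
      ∀ s' ∈ Icc (0:ℝ) T, ∀ α : A1,
      ‖C.b1 z s α - C.b1 z' s' α‖ ≤ Lb * (‖z - z'‖ + |s - s'|))
    (hb2L : ∀ z ∈ closure D.Ω2, ∀ z' ∈ closure D.Ω2, ∀ s ∈ Icc (0:ℝ) T,
      ∀ s' ∈ Icc (0:ℝ) T, ∀ α : A2,
      ‖C.b2 z s α - C.b2 z' s' α‖ ≤ Lb * (‖z - z'‖ + |s - s'|))
    {z z' : RN N} (hz : z ∈ D.H) (hz' : z' ∈ D.H)
    {t t' : ℝ} (ht : t ∈ Icc (0:ℝ) T) (ht' : t' ∈ Icc (0:ℝ) T)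
    {a : A1 × A2 × ℝ} (ha : a.2.2 ∈ Icc (0:ℝ) 1) :
    ‖C.bH z t a - C.bH z' t' a‖ ≤ Lb * (‖z - z'‖ + |t - t'|) := by
  obtain ⟨h0, h1⟩ := ha
  have key : C.bH z t a - C.bH z' t' a
      = a.2.2 • (C.b1 z t a.1 - C.b1 z' t' a.1)
        + (1 - a.2.2) • (C.b2 z t a.2.1 - C.b2 z' t' a.2.1) := by
    simp only [CtrlData.bH, smul_sub]; abel
  rw [key]
  have e1 := hb1L z (mem_cl1 D hz) z' (mem_cl1 D hz') t ht t' ht' a.1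
  have e2 := hb2L z (mem_cl2 D hz) z' (mem_cl2 D hz') t ht t' ht' a.2.1
  calc _ ≤ ‖a.2.2 • (C.b1 z t a.1 - C.b1 z' t' a.1)‖
        + ‖(1 - a.2.2) • (C.b2 z t a.2.1 - C.b2 z' t' a.2.1)‖ := norm_add_le _ _
    _ ≤ Lb * (‖z - z'‖ + |t - t'|) := by
        rw [norm_smul, norm_smul, Real.norm_eq_abs, Real.norm_eq_abs,
          abs_of_nonneg h0, abs_of_nonneg (show (0:ℝ) ≤ 1 - a.2.2 by linarith)]
        nlinarith [norm_nonneg (C.b1 z t a.1 - C.b1 z' t' a.1),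
          norm_nonneg (C.b2 z t a.2.1 - C.b2 z' t' a.2.1)]

private lemma lH_mod (C : CtrlData N A1 A2) (D : TwoDomains N) {T : ℝ} {ml : ℝ → ℝ}
    (hl1m : ∀ z ∈ closure D.Ω1, ∀ z' ∈ closure D.Ω1, ∀ s ∈ Icc (0:ℝ) T,
      ∀ s' ∈ Icc (0:ℝ) T, ∀ α : A1,
      |C.l1 z s α - C.l1 z' s' α| ≤ ml (‖z - z'‖ + |s - s'|))
    (hl2m : ∀ z ∈ closure D.Ω2, ∀ z' ∈ closure D.Ω2, ∀ s ∈ Icc (0:ℝ) T,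
      ∀ s' ∈ Icc (0:ℝ) T, ∀ α : A2,
      |C.l2 z s α - C.l2 z' s' α| ≤ ml (‖z - z'‖ + |s - s'|))
    {z z' : RN N} (hz : z ∈ D.H) (hz' : z' ∈ D.H)
    {t t' : ℝ} (ht : t ∈ Icc (0:ℝ) T) (ht' : t' ∈ Icc (0:ℝ) T)
    {a : A1 × A2 × ℝ} (ha : a.2.2 ∈ Icc (0:ℝ) 1) :
    |C.lH z t a - C.lH z' t' a| ≤ ml (‖z - z'‖ + |t - t'|) := by
  obtain ⟨h0, h1⟩ := ha
  have key : C.lH z t a - C.lH z' t' a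
      = a.2.2 * (C.l1 z t a.1 - C.l1 z' t' a.1)
        + (1 - a.2.2) * (C.l2 z t a.2.1 - C.l2 z' t' a.2.1) := by
    simp only [CtrlData.lH]; ring
  rw [key]
  have e1 := hl1m z (mem_cl1 D hz) z' (mem_cl1 D hz') t ht t' ht' a.1
  have e2 := hl2m z (mem_cl2 D hz) z' (mem_cl2 D hz') t ht t' ht' a.2.1
  calc _ ≤ |a.2.2 * (C.l1 z t a.1 - C.l1 z' t' a.1)|
        + |(1 - a.2.2) * (C.l2 z t a.2.1 - C.l2 z' t' a.2.1)| := abs_add_le _ _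
    _ ≤ ml (‖z - z'‖ + |t - t'|) := by
        rw [abs_mul, abs_mul, abs_of_nonneg h0,
          abs_of_nonneg (show (0:ℝ) ≤ 1 - a.2.2 by linarith)]
        nlinarith [abs_nonneg (C.l1 z t a.1 - C.l1 z' t' a.1),
          abs_nonneg (C.l2 z t a.2.1 - C.l2 z' t' a.2.1)]

/-- An element of `A0` built from normal controllability. -/
private lemma A0_nonempty (C : CtrlData N A1 A2) (D : TwoDomains N) {T δ : ℝ}
    (hC4 : C.HypC4 D T δ) {z : RN N} (hz : z ∈ D.H) {t : ℝ} (ht : t ∈ Icc (0:ℝ) T) :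
    (C.A0 D z t).Nonempty := by
  obtain ⟨hδ, h⟩ := hC4
  obtain ⟨α0, hα0⟩ := (h z hz t ht).1 (show (0:ℝ) ∈ Icc (-δ) δ by
    constructor <;> linarith)
  refine ⟨(α0, Classical.arbitrary A2, 1), ⟨zero_le_one, le_refl 1⟩, ?_⟩
  show ⟪C.bH z t (α0, Classical.arbitrary A2, 1), D.n1 z⟫ = 0
  have hb : C.bH z t (α0, Classical.arbitrary A2, 1) = C.b1 z t α0 := by
    simp [CtrlData.bH]
  rw [hb]
  exact hα0

private lemma hamT_bddAbove (C : CtrlData N A1 A2) (D : TwoDomains N) {Mb Ml : ℝ}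
    (hb1 : ∀ (x : RN N) (t : ℝ) (α : A1), ‖C.b1 x t α‖ ≤ Mb)
    (hb2 : ∀ (x : RN N) (t : ℝ) (α : A2), ‖C.b2 x t α‖ ≤ Mb)
    (hl1 : ∀ (x : RN N) (t : ℝ) (α : A1), |C.l1 x t α| ≤ Ml)
    (hl2 : ∀ (x : RN N) (t : ℝ) (α : A2), |C.l2 x t α| ≤ Ml)
    (z : RN N) (t : ℝ) (q : RN N) :
    ∀ r ∈ (fun a : A1 × A2 × ℝ => -⟪C.bH z t a, q⟫ - C.lH z t a) '' C.A0 D z t,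
      r ≤ Mb * ‖q‖ + Ml := by
  rintro r ⟨a, ha, rfl⟩
  have h1 : |⟪C.bH z t a, q⟫| ≤ Mb * ‖q‖ := by
    calc |⟪C.bH z t a, q⟫| ≤ ‖C.bH z t a‖ * ‖q‖ := abs_real_inner_le_norm _ _
      _ ≤ Mb * ‖q‖ := by
          have := bH_norm_le C hb1 hb2 ha.1 (z := z) (t := t)
          have hq := norm_nonneg q
          nlinarith
  have h2 : |C.lH z t a| ≤ Ml := lH_abs_le C hl1 hl2 ha.1
  have := abs_le.1 h1
  have := abs_le.1 h2
  simp only at *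
  linarith [(abs_le.1 h1).1, (abs_le.1 h2).1]

set_option maxHeartbeats 2000000 in
private lemma hamT_one_side (D : TwoDomains N) {T : ℝ} (hT : 0 < T)
    (C : CtrlData N A1 A2) {Mb Lb Ml δ : ℝ} {ml : ℝ → ℝ}
    (hC1 : C.HypC1 D T Mb Lb) (hC2 : C.HypC2 D T Ml ml)
    (hC3 : C.HypC3 D T) (hC4 : C.HypC4 D T δ)
    (Ln : ℝ≥0) (hLn : LipschitzOnWith Ln D.n1 D.H) :
    ∀ z ∈ D.H, ∀ z' ∈ D.H, ∀ t ∈ Icc (0:ℝ) T, ∀ t' ∈ Icc (0:ℝ) T,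
      ∀ p q : RN N,
        C.HamT D z t p ≤ C.HamT D z' t' q +
          ((Lb + 2 * Mb * (Lb + Mb * (Ln : ℝ)) / δ) * (‖z - z'‖ + |t - t'|) * (‖p‖ + ‖q‖) +
            Mb * ‖p - q‖ +
            ((Lb + 2 * Ml * (Lb + Mb * (Ln : ℝ)) / δ) * (‖z - z'‖ + |t - t'|) +
              ml (‖z - z'‖ + |t - t'|))) := by
  obtain ⟨-, -, hb1M, hb2M, hb1L, hb2L⟩ := hC1
  obtain ⟨hl1M, hl2M, hml0, -, -, -, hl1m, hl2m⟩ := hC2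
  obtain ⟨hconv1, hconv2⟩ := hC3
  have hδ : 0 < δ := hC4.1
  intro z hz z' hz' t ht t' ht' p q
  -- nonnegativity of the constants
  have hMb : 0 ≤ Mb := le_trans (norm_nonneg _)
    (hb1M z t (Classical.arbitrary A1))
  have hMl : 0 ≤ Ml := le_trans (abs_nonneg _)
    (hl1M z t (Classical.arbitrary A1))
  have hLb : 0 ≤ Lb := by
    have := hb1L z (mem_cl1 D hz) z (mem_cl1 D hz) 0 ⟨le_refl _, hT.le⟩ T
      ⟨hT.le, le_refl _⟩ (Classical.arbitrary A1)
    simp only [sub_self, norm_zero, abs_of_nonpos (show (0:ℝ) - T ≤ 0 by linarith)] at this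
    nlinarith [norm_nonneg (C.b1 z 0 (Classical.arbitrary A1) - C.b1 z T (Classical.arbitrary A1))]
  have hLn0 : (0:ℝ) ≤ (Ln : ℝ) := Ln.coe_nonneg
  set Cb : ℝ := Lb + Mb * (Ln : ℝ) with hCb
  have hCb0 : 0 ≤ Cb := by positivity
  set Δ : ℝ := ‖z - z'‖ + |t - t'| with hΔdef
  have hΔ0 : 0 ≤ Δ := by positivity
  have hmlΔ : 0 ≤ ml Δ := hml0 Δ
  have hn1 : ‖D.n1 z'‖ = 1 := n1_norm D hz'
  -- bound each element of the image
  have hbdd : BddAbove ((fun a : A1 × A2 × ℝ => -⟪C.bH z' t' a, q⟫ - C.lH z' t' a)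
      '' C.A0 D z' t') :=
    ⟨Mb * ‖q‖ + Ml, fun r hr => hamT_bddAbove C D hb1M hb2M hl1M hl2M z' t' q r hr⟩
  have hne : ((fun a : A1 × A2 × ℝ => -⟪C.bH z t a, p⟫ - C.lH z t a) '' C.A0 D z t).Nonempty :=
    (A0_nonempty C D hC4 hz ht).image _
  refine csSup_le hne ?_
  rintro r ⟨a, ha, rfl⟩
  obtain ⟨haμ, hatan⟩ := ha
  -- the normal component of bH at (z',t') is small
  set e : ℝ := ⟪C.bH z' t' a, D.n1 z'⟫ with hedef
  have hbHlip : ‖C.bH z t a - C.bH z' t' a‖ ≤ Lb * Δ :=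
    bH_lip C D hb1L hb2L hz hz' ht ht' haμ
  have hbHM : ‖C.bH z t a‖ ≤ Mb := bH_norm_le C hb1M hb2M haμ
  have hn1lip : ‖D.n1 z' - D.n1 z‖ ≤ (Ln : ℝ) * Δ := by
    have := hLn.dist_le_mul z' hz' z hz
    rw [dist_eq_norm, dist_eq_norm] at this
    have : ‖D.n1 z' - D.n1 z‖ ≤ (Ln : ℝ) * ‖z' - z‖ := this
    rw [norm_sub_rev z' z] at this
    nlinarith [abs_nonneg (t - t')]
  have he : |e| ≤ Cb * Δ := by
    have hsplit : e = ⟪C.bH z' t' a - C.bH z t a, D.n1 z'⟫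
        + ⟪C.bH z t a, D.n1 z' - D.n1 z⟫ := by
      rw [inner_sub_left, inner_sub_right]
      simp only [hedef]
      rw [hatan]; ring
    rw [hsplit]
    have e1 : |⟪C.bH z' t' a - C.bH z t a, D.n1 z'⟫| ≤ Lb * Δ := by
      calc _ ≤ ‖C.bH z' t' a - C.bH z t a‖ * ‖D.n1 z'‖ := abs_real_inner_le_norm _ _
        _ ≤ Lb * Δ := by rw [hn1, mul_one, norm_sub_rev]; exact hbHlip
    have e2 : |⟪C.bH z t a, D.n1 z' - D.n1 z⟫| ≤ Mb * ((Ln : ℝ) * Δ) := by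
      calc _ ≤ ‖C.bH z t a‖ * ‖D.n1 z' - D.n1 z‖ := abs_real_inner_le_norm _ _
        _ ≤ Mb * ((Ln : ℝ) * Δ) := by
            nlinarith [norm_nonneg (C.bH z t a), norm_nonneg (D.n1 z' - D.n1 z)]
    refine le_trans (abs_add_le _ _) ?_
    rw [hCb]
    nlinarith [e1, e2]
  -- the compensating control
  have hcomp : ∃ acomp : A1 × A2 × ℝ, acomp.2.2 ∈ Icc (0:ℝ) 1 ∧
      ⟪C.bH z' t' acomp, D.n1 z'⟫ = (if 0 ≤ e then -δ else δ) := by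
    by_cases h0e : 0 ≤ e
    · obtain ⟨alph, halph⟩ := (hC4.2 z' hz' t' ht').1
        (show -δ ∈ Icc (-δ) δ by constructor <;> linarith)
      refine ⟨(alph, Classical.arbitrary A2, 1), ⟨zero_le_one, le_refl 1⟩, ?_⟩
      have hb : C.bH z' t' (alph, Classical.arbitrary A2, 1) = C.b1 z' t' alph := by
        simp [CtrlData.bH]
      rw [hb, if_pos h0e]
      exact halph
    · obtain ⟨bet, hbet⟩ := (hC4.2 z' hz' t' ht').2
        (show -δ ∈ Icc (-δ) δ by constructor <;> linarith)
      refine ⟨(Classical.arbitrary A1, bet, 0), ⟨le_refl 0, zero_le_one⟩, ?_⟩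
      have hb : C.bH z' t' (Classical.arbitrary A1, bet, 0) = C.b2 z' t' bet := by
        simp [CtrlData.bH]
      rw [hb, if_neg h0e]
      have hn2 : ⟪C.b2 z' t' bet, D.n2 z'⟫ = -δ := hbet
      rw [n2_eq, inner_neg_right] at hn2
      linarith
  obtain ⟨acomp, hacompμ, hacompe⟩ := hcomp
  -- the mixing parameter
  set lam : ℝ := |e| / (|e| + δ) with hlamdef
  have hden : 0 < |e| + δ := by positivity
  have hlam0 : 0 ≤ lam := by positivity
  have hlam1 : lam ≤ 1 := by
    rw [hlamdef, div_le_one hden]; linarith [abs_nonneg e]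
  have hlammul : lam * (|e| + δ) = |e| := div_mul_cancel₀ _ hden.ne'
  set Kb : ℝ := Cb / δ with hKb
  have hKb0 : 0 ≤ Kb := by positivity
  have hlamle : lam ≤ Kb * Δ := by
    rw [hKb, div_mul_eq_mul_div, le_div_iff₀ hδ]
    nlinarith [abs_nonneg e, mul_nonneg hlam0 (abs_nonneg e)]
  have hcancel : (1 - lam) * e + lam * (if 0 ≤ e then -δ else δ) = 0 := by
    have h' := hlammul
    by_cases h0e : 0 ≤ e
    · rw [abs_of_nonneg h0e] at h'
      rw [if_pos h0e]
      linear_combination -h'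
    · rw [abs_of_neg (not_le.1 h0e)] at h'
      rw [if_neg h0e]
      linear_combination h'
  -- build the combined control
  obtain ⟨a', ha'μ, ha'b, ha'l⟩ := bH_combo C
    (hconv1 z' (mem_cl1 D hz') t' ht').2 (hconv2 z' (mem_cl2 D hz') t' ht').2
    a acomp haμ hacompμ (θ := 1 - lam) ⟨by linarith, by linarith⟩
  rw [show (1 : ℝ) - (1 - lam) = lam by ring] at ha'b ha'l
  have ha'A0 : a' ∈ C.A0 D z' t' := by
    refine ⟨ha'μ, ?_⟩
    rw [ha'b, inner_add_left, real_inner_smul_left, real_inner_smul_left, ← hedef, hacompe]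
    exact hcancel
  -- the value at a' is attained in the sup
  have hle : -⟪C.bH z' t' a', q⟫ - C.lH z' t' a' ≤ C.HamT D z' t' q :=
    le_csSup hbdd ⟨a', ha'A0, rfl⟩
  -- main estimate
  have hq0 := norm_nonneg q
  have hp0 := norm_nonneg p
  have hpq0 := norm_nonneg (p - q)
  -- inner products expansion
  have hexp : ⟪C.bH z' t' a', q⟫ = (1 - lam) * ⟪C.bH z' t' a, q⟫ + lam * ⟪C.bH z' t' acomp, q⟫ := by
    rw [ha'b, inner_add_left, real_inner_smul_left, real_inner_smul_left]
  -- term bounds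
  have hT1 : ⟪C.bH z' t' a, q⟫ - ⟪C.bH z t a, p⟫ ≤ Lb * Δ * ‖q‖ + Mb * ‖p - q‖ := by
    have hsplit : ⟪C.bH z' t' a, q⟫ - ⟪C.bH z t a, p⟫
        = ⟪C.bH z' t' a - C.bH z t a, q⟫ + ⟪C.bH z t a, q - p⟫ := by
      rw [inner_sub_left, inner_sub_right]; ring
    rw [hsplit]
    have e1 : |⟪C.bH z' t' a - C.bH z t a, q⟫| ≤ Lb * Δ * ‖q‖ := by
      calc _ ≤ ‖C.bH z' t' a - C.bH z t a‖ * ‖q‖ := abs_real_inner_le_norm _ _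
        _ ≤ Lb * Δ * ‖q‖ := by
            rw [norm_sub_rev]
            nlinarith [norm_nonneg (C.bH z t a - C.bH z' t' a)]
    have e2 : |⟪C.bH z t a, q - p⟫| ≤ Mb * ‖p - q‖ := by
      calc _ ≤ ‖C.bH z t a‖ * ‖q - p‖ := abs_real_inner_le_norm _ _
        _ ≤ Mb * ‖p - q‖ := by
            rw [norm_sub_rev q p]
            nlinarith [norm_nonneg (C.bH z t a), norm_nonneg (p - q)]
    linarith [(abs_le.1 e1).2, (abs_le.1 e2).2]
  have hT2 : C.lH z' t' a - C.lH z t a ≤ ml Δ := by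
    have := lH_mod C D hl1m hl2m hz hz' ht ht' haμ
    linarith [(abs_le.1 this).1]
  have hT3 : lam * (⟪C.bH z' t' acomp, q⟫ - ⟪C.bH z' t' a, q⟫) ≤ Kb * Δ * (2 * Mb * ‖q‖) := by
    have b1 : |⟪C.bH z' t' a, q⟫| ≤ Mb * ‖q‖ := by
      calc _ ≤ ‖C.bH z' t' a‖ * ‖q‖ := abs_real_inner_le_norm _ _
        _ ≤ Mb * ‖q‖ := by
            nlinarith [norm_nonneg (C.bH z' t' a), bH_norm_le C hb1M hb2M haμ (z := z') (t := t')]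
    have b2 : |⟪C.bH z' t' acomp, q⟫| ≤ Mb * ‖q‖ := by
      calc _ ≤ ‖C.bH z' t' acomp‖ * ‖q‖ := abs_real_inner_le_norm _ _
        _ ≤ Mb * ‖q‖ := by
            nlinarith [norm_nonneg (C.bH z' t' acomp), bH_norm_le C hb1M hb2M hacompμ (z := z') (t := t')]
    have hdiff : ⟪C.bH z' t' acomp, q⟫ - ⟪C.bH z' t' a, q⟫ ≤ 2 * (Mb * ‖q‖) := by
      linarith [(abs_le.1 b1).1, (abs_le.1 b2).2]
    have h2Mq : 0 ≤ 2 * (Mb * ‖q‖) := by positivity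
    calc lam * (⟪C.bH z' t' acomp, q⟫ - ⟪C.bH z' t' a, q⟫) ≤ lam * (2 * (Mb * ‖q‖)) := by
          nlinarith [hdiff, hlam0, hlamle, h2Mq]
      _ ≤ Kb * Δ * (2 * Mb * ‖q‖) := by nlinarith [hlamle, h2Mq, hlam0]
  have hT4 : lam * (C.lH z' t' acomp - C.lH z' t' a) ≤ Kb * Δ * (2 * Ml) := by
    have b1 : |C.lH z' t' a| ≤ Ml := lH_abs_le C hl1M hl2M haμ
    have b2 : |C.lH z' t' acomp| ≤ Ml := lH_abs_le C hl1M hl2M hacompμ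
    have hdiff : C.lH z' t' acomp - C.lH z' t' a ≤ 2 * Ml := by
      linarith [(abs_le.1 b1).1, (abs_le.1 b2).2]
    have h2Ml : 0 ≤ 2 * Ml := by linarith
    calc lam * (C.lH z' t' acomp - C.lH z' t' a) ≤ lam * (2 * Ml) := by nlinarith
      _ ≤ Kb * Δ * (2 * Ml) := by nlinarith
  -- put it together
  have hfinal : -⟪C.bH z t a, p⟫ - C.lH z t a
      ≤ (-⟪C.bH z' t' a', q⟫ - C.lH z' t' a')
        + ((Lb + 2 * Mb * Kb) * Δ * (‖p‖ + ‖q‖) + Mb * ‖p - q‖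
          + ((Lb + 2 * Ml * Kb) * Δ + ml Δ)) := by
    rw [hexp, ha'l]
    have key : -⟪C.bH z t a, p⟫ - C.lH z t a
        - (-((1 - lam) * ⟪C.bH z' t' a, q⟫ + lam * ⟪C.bH z' t' acomp, q⟫)
          - ((1 - lam) * C.lH z' t' a + lam * C.lH z' t' acomp))
        = (⟪C.bH z' t' a, q⟫ - ⟪C.bH z t a, p⟫) + (C.lH z' t' a - C.lH z t a)
          + lam * (⟪C.bH z' t' acomp, q⟫ - ⟪C.bH z' t' a, q⟫)
          + lam * (C.lH z' t' acomp - C.lH z' t' a) := by ring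
    have hx1 : 0 ≤ (Lb + 2 * Mb * Kb) * Δ * ‖p‖ := by
      have : 0 ≤ Lb + 2 * Mb * Kb := by positivity
      positivity
    have hx2 : 0 ≤ Lb * Δ := mul_nonneg hLb hΔ0
    linarith [key, hT1, hT2, hT3, hT4, hx1, hx2]
  calc -⟪C.bH z t a, p⟫ - C.lH z t a ≤ _ := hfinal
    _ ≤ C.HamT D z' t' q
        + ((Lb + 2 * Mb * Kb) * Δ * (‖p‖ + ‖q‖) + Mb * ‖p - q‖
          + ((Lb + 2 * Ml * Kb) * Δ + ml Δ)) := by linarith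
    _ = _ := by rw [hKb, hCb, hΔdef]; ring

end Core
/-- Lemma `lemHTlip`: Lipschitz-type regularity of the tangential
Hamiltonian `H_T` with respect to all its variables. -/
theorem statement18
    {N : ℕ} (D : TwoDomains N) (T : ℝ) (hT : 0 < T)
    {A1 A2 : Type} [MetricSpace A1] [CompactSpace A1] [Nonempty A1]
    [MetricSpace A2] [CompactSpace A2] [Nonempty A2]
    [MeasurableSpace A1] [BorelSpace A1] [MeasurableSpace A2] [BorelSpace A2]
    (C : CtrlData N A1 A2) (Mb Lb Ml δ : ℝ) (ml : ℝ → ℝ)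
    (hC1 : C.HypC1 D T Mb Lb) (hC2 : C.HypC2 D T Ml ml)
    (hC3 : C.HypC3 D T) (hC4 : C.HypC4 D T δ)
    (Ln : ℝ≥0) (hLn : LipschitzOnWith Ln D.n1 D.H) :
    ∀ z ∈ D.H, ∀ z' ∈ D.H, ∀ t ∈ Icc (0:ℝ) T, ∀ t' ∈ Icc (0:ℝ) T,
      ∀ p q : RN N, ⟪p, D.n1 z⟫ = 0 → ⟪q, D.n1 z'⟫ = 0 →
        |C.HamT D z t p - C.HamT D z' t' q| ≤
          (Lb + 2 * Mb * (Lb + Mb * (Ln : ℝ)) / δ) * (‖z - z'‖ + |t - t'|) * (‖p‖ + ‖q‖) +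
            Mb * ‖p - q‖ +
            ((Lb + 2 * Ml * (Lb + Mb * (Ln : ℝ)) / δ) * (‖z - z'‖ + |t - t'|) +
              ml (‖z - z'‖ + |t - t'|)) := by
  intro z hz z' hz' t ht t' ht' p q hp hq
  rw [abs_sub_le_iff]
  constructor
  · have h := hamT_one_side D hT C hC1 hC2 hC3 hC4 Ln hLn z hz z' hz' t ht t' ht' p q
    linarith
  · have h := hamT_one_side D hT C hC1 hC2 hC3 hC4 Ln hLn z' hz' z hz t' ht' t ht q p
    rw [norm_sub_rev z' z, abs_sub_comm t' t, norm_sub_rev q p, add_comm ‖q‖ ‖p‖] at h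
    linarith
end
end
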